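/- Let U = [U_k U_c] ∈ ℝ^{m×m} and V = [V_k V_c] ∈ ℝ^{n×n} be orthogonal matrices with U_k ∈ ℝ^{m×k}, V_k ∈ ℝ^{n×k}, and let A = U_k·D·V_kᵀ for some D ∈ ℝ^{k×k}. For any Δ ∈ ℝ^{m×n}, define Δ₂ = U_c·U_cᵀ·Δ·V_c·V_cᵀ and Δ₁ = Δ − Δ₂. Then ‖Δ‖_* + 2‖A‖_* − 2‖Δ + A‖_* ≤ 3‖Δ₁‖_* − ‖Δ₂‖_*. -/

import Mathlib

open Matrix

/-- Frobenius norm of a real matrix: `(tr(MᵀM))^{1/2}`. -/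
noncomputable def frobNorm {m n : ℕ} (M : Matrix (Fin m) (Fin n) ℝ) : ℝ :=
  Real.sqrt ((Mᵀ * M).trace)

/-- The positive semidefinite square root, as `Matrix.PosSemidef.sqrt` was defined in Mathlib
(Dec 2024); that declaration has since been removed. -/
noncomputable def Matrix.PosSemidef.sqrt {n : Type*} [Fintype n] [DecidableEq n]
    {A : Matrix n n ℝ} (hA : A.PosSemidef) : Matrix n n ℝ :=
  hA.1.eigenvectorUnitary.1 * diagonal ((↑) ∘ (Real.sqrt ·) ∘ hA.1.eigenvalues) *
  (star hA.1.eigenvectorUnitary : Matrix n n ℝ)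

/-- Nuclear norm of a real matrix: the trace of the positive semidefinite
square root of `MᵀM` (= sum of singular values). -/
noncomputable def nuclearNorm {m n : ℕ} (M : Matrix (Fin m) (Fin n) ℝ) : ℝ :=
  (Matrix.posSemidef_conjTranspose_mul_self M).sqrt.trace

/-- Spectral (ℓ2 → ℓ2 operator) norm of a real matrix: its largest singular value. -/
noncomputable def opNorm {m n : ℕ} (M : Matrix (Fin m) (Fin n) ℝ) : ℝ :=
  ‖LinearMap.toContinuousLinearMap (Matrix.toEuclideanLin M)‖

/-- The ℓ1 norm of the vectorization of a matrix. -/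
noncomputable def vecL1 {m n : ℕ} (M : Matrix (Fin m) (Fin n) ℝ) : ℝ :=
  ∑ i, ∑ j, |M i j|

/-- The ℓ∞ norm of the vectorization of a matrix. -/
noncomputable def vecLinf {m n : ℕ} (M : Matrix (Fin m) (Fin n) ℝ) : ℝ :=
  ⨆ i, ⨆ j, |M i j|

/-- Frobenius (trace) inner product of two matrices. -/
noncomputable def traceInner {m n : ℕ} (M N : Matrix (Fin m) (Fin n) ℝ) : ℝ :=
  (Mᵀ * N).trace

open scoped Classical in
/-- The inverse of the positive semidefinite square root of a positive semidefinite
matrix (junk value `0` if the matrix is not positive semidefinite). -/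
noncomputable def matInvSqrt {r : ℕ} (S : Matrix (Fin r) (Fin r) ℝ) :
    Matrix (Fin r) (Fin r) ℝ :=
  if h : S.PosSemidef then h.sqrt⁻¹ else 0

lemma Matrix.PosSemidef.sqrt_mul_self {n : Type*} [Fintype n] [DecidableEq n]
    {A : Matrix n n ℝ} (hA : A.PosSemidef) : hA.sqrt * hA.sqrt = A := by
  have hU : (star hA.1.eigenvectorUnitary : Matrix n n ℝ) * hA.1.eigenvectorUnitary.1 = 1 :=
    Matrix.mem_unitaryGroup_iff'.mp hA.1.eigenvectorUnitary.2
  conv_rhs => rw [hA.1.spectral_theorem, Unitary.conjStarAlgAut_apply]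
  rw [Matrix.PosSemidef.sqrt]
  simp only [Matrix.mul_assoc]
  rw [← Matrix.mul_assoc _ hA.1.eigenvectorUnitary.1, hU, Matrix.one_mul,
    ← Matrix.mul_assoc (diagonal _), Matrix.diagonal_mul_diagonal]
  congr 3
  funext i
  simp [Real.mul_self_sqrt (hA.eigenvalues_nonneg i)]

lemma Matrix.PosSemidef.sq_sqrt {n : Type*} [Fintype n] [DecidableEq n]
    {A : Matrix n n ℝ} (hA : A.PosSemidef) : hA.sqrt ^ 2 = A := by
  rw [pow_two]; exact hA.sqrt_mul_self

lemma Matrix.PosSemidef.posSemidef_sqrt {n : Type*} [Fintype n] [DecidableEq n]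
    {A : Matrix n n ℝ} (hA : A.PosSemidef) : hA.sqrt.PosSemidef := by
  have hd : Matrix.PosSemidef (diagonal ((↑) ∘ (Real.sqrt ·) ∘ hA.1.eigenvalues) :
      Matrix n n ℝ) :=
    Matrix.posSemidef_diagonal_iff.mpr fun j => by simp [Real.sqrt_nonneg]
  have h2 := hd.mul_mul_conjTranspose_same hA.1.eigenvectorUnitary.1
  rw [Matrix.PosSemidef.sqrt, Matrix.star_eq_conjTranspose]
  exact h2

lemma Matrix.PosSemidef.eq_of_sq_eq_sq' {n : Type*} [Fintype n] [DecidableEq n]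
    {A B : Matrix n n ℝ} (hA : A.PosSemidef) (hB : B.PosSemidef) (hAB : A ^ 2 = B ^ 2) :
    A = B := by
  by_contra h_ne
  obtain ⟨v, t, ht, hv, hv'⟩ :=
    (hA.1.sub hB.1).exists_eigenvector_of_ne_zero (sub_ne_zero.mpr h_ne)
  have hAB' : (A - B)ᵀ = A - B := by
    have := (hA.1.sub hB.1).eq
    rwa [conjTranspose_eq_transpose_of_trivial] at this
  have h_sum : 0 = t * (v ⬝ᵥ A *ᵥ v + v ⬝ᵥ B *ᵥ v) := calc
    0 = v ⬝ᵥ (A ^ 2 - B ^ 2) *ᵥ v := by rw [hAB, sub_self, zero_mulVec, dotProduct_zero]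
    _ = v ⬝ᵥ A *ᵥ (A - B) *ᵥ v + v ⬝ᵥ (A - B) *ᵥ B *ᵥ v := by
      rw [mulVec_mulVec, mulVec_mulVec, ← dotProduct_add, ← add_mulVec, mul_sub, sub_mul,
        add_sub, sub_add_cancel, pow_two, pow_two]
    _ = t * (v ⬝ᵥ A *ᵥ v) + (A - B) *ᵥ v ⬝ᵥ B *ᵥ v := by
      rw [dotProduct_mulVec v (A - B), ← mulVec_transpose, hAB', hv', mulVec_smul,
        dotProduct_smul, smul_eq_mul]
    _ = t * (v ⬝ᵥ A *ᵥ v + v ⬝ᵥ B *ᵥ v) := by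
      rw [hv', smul_dotProduct, smul_eq_mul]; ring
  have h_sum' : v ⬝ᵥ A *ᵥ v + v ⬝ᵥ B *ᵥ v = 0 := by
    rcases mul_eq_zero.mp h_sum.symm with h | h
    · exact absurd h ht
    · exact h
  have hA0 : 0 ≤ v ⬝ᵥ A *ᵥ v := by simpa using hA.dotProduct_mulVec_nonneg v
  have hB0 : 0 ≤ v ⬝ᵥ B *ᵥ v := by simpa using hB.dotProduct_mulVec_nonneg v
  have aux : v ⬝ᵥ (A - B) *ᵥ v = 0 := by
    rw [sub_mulVec, dotProduct_sub]; linarith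
  rw [hv', dotProduct_smul, smul_eq_mul, mul_eq_zero] at aux
  rcases aux with h | h
  · exact ht h
  · exact hv (dotProduct_self_eq_zero.mp h)

lemma Matrix.PosSemidef.eq_sqrt_of_sq_eq {n : Type*} [Fintype n] [DecidableEq n]
    {A B : Matrix n n ℝ} (hB : B.PosSemidef) (hA : A.PosSemidef) (h : B ^ 2 = A) :
    B = hA.sqrt :=
  hB.eq_of_sq_eq_sq' hA.posSemidef_sqrt (by rw [h, hA.sq_sqrt])

lemma myspec {m n : ℕ} (C : Matrix (Fin m) (Fin n) ℝ) :
    ∃ (V : Matrix (Fin n) (Fin n) ℝ) (lam : Fin n → ℝ),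
      Vᵀ * V = 1 ∧ V * Vᵀ = 1 ∧ Cᵀ * C = V * Matrix.diagonal lam * Vᵀ ∧
      (∀ j, 0 ≤ lam j) ∧ nuclearNorm C = ∑ j, Real.sqrt (lam j) := by
  have h := Matrix.posSemidef_conjTranspose_mul_self C
  have hH := h.1
  have hCT : Cᴴ = Cᵀ := Matrix.conjTranspose_eq_transpose_of_trivial C
  set V : Matrix (Fin n) (Fin n) ℝ := (hH.eigenvectorUnitary : Matrix (Fin n) (Fin n) ℝ) with hV
  have hstar : star V = Vᵀ := by
    rw [Matrix.star_eq_conjTranspose, Matrix.conjTranspose_eq_transpose_of_trivial]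
  have hVtV : Vᵀ * V = 1 := by
    rw [← hstar]; exact (Matrix.mem_unitaryGroup_iff'.mp hH.eigenvectorUnitary.2)
  have hVVt : V * Vᵀ = 1 := by
    rw [← hstar]; exact (Matrix.mem_unitaryGroup_iff.mp hH.eigenvectorUnitary.2)
  have hdiag : (Matrix.diagonal (RCLike.ofReal ∘ hH.eigenvalues) : Matrix (Fin n) (Fin n) ℝ)
      = Matrix.diagonal hH.eigenvalues := by congr 1
  have hspec : Cᵀ * C = V * Matrix.diagonal hH.eigenvalues * Vᵀ := by
    rw [← hCT]
    conv_lhs => rw [hH.spectral_theorem, Unitary.conjStarAlgAut_apply]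
    rw [hstar, hdiag]
  refine ⟨V, hH.eigenvalues, hVtV, hVVt, hspec, fun j => h.eigenvalues_nonneg j, ?_⟩
  set B : Matrix (Fin n) (Fin n) ℝ :=
    V * Matrix.diagonal (fun j => Real.sqrt (hH.eigenvalues j)) * Vᵀ with hB
  have hmid : Vᵀ * (V * (Matrix.diagonal (fun j => Real.sqrt (hH.eigenvalues j)) * Vᵀ))
      = Matrix.diagonal (fun j => Real.sqrt (hH.eigenvalues j)) * Vᵀ := by
    rw [← Matrix.mul_assoc, hVtV, Matrix.one_mul]
  have hsq : B ^ 2 = Cᴴ * C := by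
    rw [hCT, pow_two, hspec, hB]
    simp only [Matrix.mul_assoc]
    rw [hmid, ← Matrix.mul_assoc (Matrix.diagonal _) (Matrix.diagonal _) Vᵀ,
      Matrix.diagonal_mul_diagonal]
    have he : (fun j => Real.sqrt (hH.eigenvalues j) * Real.sqrt (hH.eigenvalues j))
        = hH.eigenvalues := funext fun j => Real.mul_self_sqrt (h.eigenvalues_nonneg j)
    rw [he]
  have hpsd : B.PosSemidef := by
    have hd : Matrix.PosSemidef (Matrix.diagonal (fun j => Real.sqrt (hH.eigenvalues j))) :=
      Matrix.posSemidef_diagonal_iff.mpr fun j => Real.sqrt_nonneg _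
    have h2 := hd.mul_mul_conjTranspose_same V
    rw [hB]
    simpa only [Matrix.conjTranspose_eq_transpose_of_trivial] using h2
  have hsqrt := hpsd.eq_sqrt_of_sq_eq (Matrix.posSemidef_conjTranspose_mul_self C) hsq
  rw [nuclearNorm, ← hsqrt, hB, Matrix.trace_mul_cycle, hVtV,
    Matrix.one_mul, Matrix.trace_diagonal]
lemma quad_eval {n : ℕ} (V : Matrix (Fin n) (Fin n) ℝ) (e : Fin n → ℝ) (y : Fin n → ℝ) :
    y ⬝ᵥ ((V * Matrix.diagonal e * Vᵀ) *ᵥ y) = ∑ j, e j * ((Vᵀ *ᵥ y) j)^2 := by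
  rw [Matrix.mul_assoc, ← Matrix.mulVec_mulVec, ← Matrix.mulVec_mulVec,
    Matrix.dotProduct_mulVec, ← Matrix.mulVec_transpose]
  simp only [dotProduct, Matrix.mulVec_diagonal]
  exact Finset.sum_congr rfl fun j _ => by ring

lemma quad_self {m n : ℕ} (W : Matrix (Fin m) (Fin n) ℝ) (y : Fin n → ℝ) :
    y ⬝ᵥ ((Wᵀ * W) *ᵥ y) = (W *ᵥ y) ⬝ᵥ (W *ᵥ y) := by
  rw [← Matrix.mulVec_mulVec, Matrix.dotProduct_mulVec, ← Matrix.mulVec_transpose,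
    Matrix.transpose_transpose]

lemma mydual {m n : ℕ} (C : Matrix (Fin m) (Fin n) ℝ) :
    ∃ W : Matrix (Fin m) (Fin n) ℝ,
      (Wᵀ * C).trace = nuclearNorm C ∧
      ∀ y : Fin n → ℝ, y ⬝ᵥ ((Wᵀ * W) *ᵥ y) ≤ y ⬝ᵥ y := by
  classical
  obtain ⟨V, lam, hVtV, hVVt, hspec, hlam, hnn⟩ := myspec C
  set g : Fin n → ℝ := fun j => if lam j = 0 then 0 else (Real.sqrt (lam j))⁻¹ with hg
  set S : Matrix (Fin n) (Fin n) ℝ := V * Matrix.diagonal g * Vᵀ with hS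
  have hcancel : ∀ X : Matrix (Fin n) (Fin n) ℝ, Vᵀ * (V * X) = X := fun X => by
    rw [← Matrix.mul_assoc, hVtV, Matrix.one_mul]
  have hSsym : Sᵀ = S := by
    simp [hS, Matrix.transpose_mul, Matrix.diagonal_transpose, Matrix.mul_assoc]
  have hglam : ∀ j, g j * lam j = Real.sqrt (lam j) := by
    intro j
    by_cases h : lam j = 0
    · simp [hg, h]
    · have hs : Real.sqrt (lam j) ≠ 0 := by
        have : 0 < lam j := lt_of_le_of_ne (hlam j) (Ne.symm h)
        positivity
      simp only [hg, if_neg h]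
      rw [inv_mul_eq_div, div_eq_iff hs, Real.mul_self_sqrt (hlam j)]
  have h2 : S * (Cᵀ * C) = V * Matrix.diagonal (fun j => g j * lam j) * Vᵀ := by
    rw [hspec, hS]
    simp only [Matrix.mul_assoc]
    rw [hcancel (Matrix.diagonal lam * Vᵀ), ← Matrix.mul_assoc (Matrix.diagonal g),
      Matrix.diagonal_mul_diagonal]
  refine ⟨C * S, ?_, ?_⟩
  · have h1 : (C * S)ᵀ * C = S * (Cᵀ * C) := by
      rw [Matrix.transpose_mul, hSsym, Matrix.mul_assoc]
    rw [h1, h2, hnn, Matrix.trace_mul_cycle, hVtV, Matrix.one_mul, Matrix.trace_diagonal]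
    exact Finset.sum_congr rfl fun j _ => hglam j
  · intro y
    have hWW : (C * S)ᵀ * (C * S) =
        V * Matrix.diagonal (fun j => g j * lam j * g j) * Vᵀ := by
      have ha : (C * S)ᵀ * (C * S) = (S * (Cᵀ * C)) * S := by
        rw [Matrix.transpose_mul, hSsym]
        simp only [Matrix.mul_assoc]
      rw [ha, h2, hS]
      simp only [Matrix.mul_assoc]
      rw [hcancel (Matrix.diagonal g * Vᵀ),
        ← Matrix.mul_assoc (Matrix.diagonal fun j => g j * lam j) (Matrix.diagonal g),
        Matrix.diagonal_mul_diagonal]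
    rw [hWW, quad_eval]
    have hone : y ⬝ᵥ y = ∑ j, (1:ℝ) * ((Vᵀ *ᵥ y) j)^2 := by
      have h1 : (1 : Matrix (Fin n) (Fin n) ℝ) = V * Matrix.diagonal (fun _ => (1:ℝ)) * Vᵀ := by
        rw [Matrix.diagonal_one, Matrix.mul_one, hVVt]
      rw [← quad_eval, ← h1, Matrix.one_mulVec]
    rw [hone]
    refine Finset.sum_le_sum fun j _ => ?_
    have he : g j * lam j * g j ≤ 1 := by
      by_cases h : lam j = 0
      · simp [hg, h]
      · have hpos : 0 < lam j := lt_of_le_of_ne (hlam j) (Ne.symm h)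
        have hs : 0 < Real.sqrt (lam j) := Real.sqrt_pos.mpr hpos
        rw [hglam j]
        simp only [hg, if_neg h]
        rw [mul_inv_cancel₀ (ne_of_gt hs)]
    have hz : (0:ℝ) ≤ ((Vᵀ *ᵥ y) j)^2 := sq_nonneg _
    nlinarith [sq_nonneg ((Vᵀ *ᵥ y) j)]

lemma mydual_le {m n : ℕ} (W M : Matrix (Fin m) (Fin n) ℝ)
    (hW : ∀ y : Fin n → ℝ, y ⬝ᵥ ((Wᵀ * W) *ᵥ y) ≤ y ⬝ᵥ y) :
    (Wᵀ * M).trace ≤ nuclearNorm M := by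
  obtain ⟨V, mu, hVtV, hVVt, hspec, hmu, hnn⟩ := myspec M
  have h1 : (Wᵀ * M).trace = ((W * V)ᵀ * (M * V)).trace := by
    have ha : (W * V)ᵀ * (M * V) = (Vᵀ * Wᵀ) * (M * V) := by
      rw [Matrix.transpose_mul]
    have hb : (M * V) * (Vᵀ * Wᵀ) = M * Wᵀ := by
      rw [Matrix.mul_assoc, ← Matrix.mul_assoc V, hVVt, Matrix.one_mul]
    rw [ha, Matrix.trace_mul_comm (Vᵀ * Wᵀ), hb, Matrix.trace_mul_comm]
  have h2 : ((W * V)ᵀ * (M * V)).trace = ∑ j, ∑ i, (W * V) i j * (M * V) i j := by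
    simp [Matrix.trace, Matrix.diag, Matrix.mul_apply, Matrix.transpose_apply, mul_comm]
  have hcol1 : ∀ j, ∑ i, ((W * V) i j)^2 ≤ 1 := by
    intro j
    set y : Fin n → ℝ := fun l => V l j with hy
    have hb := hW y
    rw [quad_self] at hb
    have hl : (W *ᵥ y) ⬝ᵥ (W *ᵥ y) = ∑ i, ((W * V) i j)^2 := by
      simp [dotProduct, Matrix.mulVec, Matrix.mul_apply, hy, pow_two]
    have hr : y ⬝ᵥ y = 1 := by
      have : y ⬝ᵥ y = (Vᵀ * V) j j := by
        simp [dotProduct, Matrix.mul_apply, hy, Matrix.transpose_apply]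
      rw [this, hVtV, Matrix.one_apply_eq]
    rw [hl, hr] at hb
    exact hb
  have hcol2 : ∀ j, ∑ i, ((M * V) i j)^2 = mu j := by
    intro j
    have ha : (M * V)ᵀ * (M * V) = Matrix.diagonal mu := by
      have : (M * V)ᵀ * (M * V) = Vᵀ * ((Mᵀ * M) * V) := by
        simp only [Matrix.transpose_mul, Matrix.mul_assoc]
      rw [this, hspec]
      simp only [Matrix.mul_assoc]
      rw [← Matrix.mul_assoc Vᵀ V, hVtV, Matrix.one_mul, Matrix.mul_one]
    have hb : ((M * V)ᵀ * (M * V)) j j = mu j := by rw [ha, Matrix.diagonal_apply_eq]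
    rw [← hb]
    simp [Matrix.mul_apply, Matrix.transpose_apply, pow_two, mul_comm]
  rw [h1, h2, hnn]
  refine Finset.sum_le_sum fun j _ => ?_
  have hcs := Finset.sum_mul_sq_le_sq_mul_sq Finset.univ (fun i => (W * V) i j)
    (fun i => (M * V) i j)
  have t1 : ∑ i, (W * V) i j * (M * V) i j ≤
      Real.sqrt ((∑ i, ((W * V) i j)^2) * (∑ i, ((M * V) i j)^2)) := by
    calc ∑ i, (W * V) i j * (M * V) i j
        ≤ |∑ i, (W * V) i j * (M * V) i j| := le_abs_self _
      _ = Real.sqrt ((∑ i, (W * V) i j * (M * V) i j)^2) := (Real.sqrt_sq_eq_abs _).symm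
      _ ≤ _ := Real.sqrt_le_sqrt hcs
  refine t1.trans ?_
  rw [Real.sqrt_mul (by positivity), hcol2 j]
  have : Real.sqrt (∑ i, ((W * V) i j)^2) ≤ 1 := by
    rw [show (1:ℝ) = Real.sqrt 1 by simp]
    exact Real.sqrt_le_sqrt (hcol1 j)
  calc Real.sqrt (∑ i, ((W * V) i j)^2) * Real.sqrt (mu j)
      ≤ 1 * Real.sqrt (mu j) := by
        exact mul_le_mul_of_nonneg_right this (Real.sqrt_nonneg _)
    _ = Real.sqrt (mu j) := one_mul _

lemma nn_triangle {m n : ℕ} (M N : Matrix (Fin m) (Fin n) ℝ) :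
    nuclearNorm (M + N) ≤ nuclearNorm M + nuclearNorm N := by
  obtain ⟨W, hWtr, hWq⟩ := mydual (M + N)
  have h : (Wᵀ * (M + N)).trace = (Wᵀ * M).trace + (Wᵀ * N).trace := by
    rw [Matrix.mul_add, Matrix.trace_add]
  have hM := mydual_le W M hWq
  have hN := mydual_le W N hWq
  linarith
lemma sqrtPQzero {n : ℕ} {P Q : Matrix (Fin n) (Fin n) ℝ} (hP : P.PosSemidef)
    (hQ : Q.PosSemidef) (h : P * Q = 0) : hP.sqrt * Q = 0 := by
  have hs := hP.posSemidef_sqrt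
  have key : (hP.sqrt * Q)ᴴ * (hP.sqrt * Q) = 0 := by
    rw [Matrix.conjTranspose_mul, hs.1, hQ.1, Matrix.mul_assoc,
      ← Matrix.mul_assoc hP.sqrt hP.sqrt Q, hP.sqrt_mul_self, h, Matrix.mul_zero]
  exact Matrix.conjTranspose_mul_self_eq_zero.mp key

lemma nn_add_of_orth {m n : ℕ} (X Y : Matrix (Fin m) (Fin n) ℝ)
    (h1 : Xᵀ * Y = 0) (h2 : X * Yᵀ = 0) :
    nuclearNorm (X + Y) = nuclearNorm X + nuclearNorm Y := by
  have hP := Matrix.posSemidef_conjTranspose_mul_self X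
  have hQ := Matrix.posSemidef_conjTranspose_mul_self Y
  have hXt : Xᴴ = Xᵀ := Matrix.conjTranspose_eq_transpose_of_trivial X
  have hYt : Yᴴ = Yᵀ := Matrix.conjTranspose_eq_transpose_of_trivial Y
  have h2' : Y * Xᵀ = 0 := by
    have := congrArg Matrix.transpose h2
    simpa using this
  have h1' : Yᵀ * X = 0 := by
    have := congrArg Matrix.transpose h1
    simpa using this
  have hQP : (Yᴴ * Y) * (Xᴴ * X) = 0 := by
    rw [hXt, hYt, Matrix.mul_assoc, ← Matrix.mul_assoc Y Xᵀ X, h2', Matrix.zero_mul,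
      Matrix.mul_zero]
  have e1 : hQ.sqrt * (Xᴴ * X) = 0 := sqrtPQzero hQ hP hQP
  have e1' : (Xᴴ * X) * hQ.sqrt = 0 := by
    have := congrArg Matrix.transpose e1
    have hsym : (hQ.sqrt)ᵀ = hQ.sqrt := by
      have := hQ.posSemidef_sqrt.1
      rwa [Matrix.IsHermitian, Matrix.conjTranspose_eq_transpose_of_trivial] at this
    have hsymP : (Xᴴ * X)ᵀ = Xᴴ * X := by
      have := hP.1
      rwa [Matrix.IsHermitian, Matrix.conjTranspose_eq_transpose_of_trivial] at this
    rw [Matrix.transpose_mul, hsym, hsymP] at this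
    simpa using this
  have e2 : hP.sqrt * hQ.sqrt = 0 := sqrtPQzero hP hQ.posSemidef_sqrt e1'
  have e2' : hQ.sqrt * hP.sqrt = 0 := by
    have := congrArg Matrix.transpose e2
    have hsymQ : (hQ.sqrt)ᵀ = hQ.sqrt := by
      have := hQ.posSemidef_sqrt.1
      rwa [Matrix.IsHermitian, Matrix.conjTranspose_eq_transpose_of_trivial] at this
    have hsymP : (hP.sqrt)ᵀ = hP.sqrt := by
      have := hP.posSemidef_sqrt.1
      rwa [Matrix.IsHermitian, Matrix.conjTranspose_eq_transpose_of_trivial] at this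
    rw [Matrix.transpose_mul, hsymQ, hsymP] at this
    simpa using this
  have hcross1 : Xᴴ * Y = 0 := by rw [hXt]; exact h1
  have hcross2 : Yᴴ * X = 0 := by rw [hYt]; exact h1'
  have hsq : (hP.sqrt + hQ.sqrt) ^ 2 = (X + Y)ᴴ * (X + Y) := by
    rw [pow_two, Matrix.add_mul, Matrix.mul_add, Matrix.mul_add, hP.sqrt_mul_self,
      hQ.sqrt_mul_self, e2, e2', Matrix.conjTranspose_add, Matrix.add_mul, Matrix.mul_add,
      Matrix.mul_add, hcross1, hcross2]
  have hsqrt := (hP.posSemidef_sqrt.add hQ.posSemidef_sqrt).eq_sqrt_of_sq_eq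
    (Matrix.posSemidef_conjTranspose_mul_self (X + Y)) hsq
  simp only [nuclearNorm]
  rw [← hsqrt, Matrix.trace_add]

lemma nn_congr {m n : ℕ} (M N : Matrix (Fin m) (Fin n) ℝ) (h : Mᴴ * M = Nᴴ * N) :
    nuclearNorm M = nuclearNorm N := by
  have h1 := Matrix.posSemidef_conjTranspose_mul_self M
  have h2 := Matrix.posSemidef_conjTranspose_mul_self N
  have key := h1.posSemidef_sqrt.eq_sqrt_of_sq_eq h2 (by rw [h1.sq_sqrt, h])
  simp only [nuclearNorm]
  rw [key]
/-- The nuclear-norm cone inequality (equation (eq:triangular)) used in the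
proofs of Theorems 3 and 4. -/
theorem stmt_4
    (m n k : ℕ)
    (Uk : Matrix (Fin m) (Fin k) ℝ) (Uc : Matrix (Fin m) (Fin (m - k)) ℝ)
    (Vk : Matrix (Fin n) (Fin k) ℝ) (Vc : Matrix (Fin n) (Fin (n - k)) ℝ)
    (hUk : Ukᵀ * Uk = 1) (hUc : Ucᵀ * Uc = 1) (hUkc : Ukᵀ * Uc = 0)
    (hUfull : Uk * Ukᵀ + Uc * Ucᵀ = 1)
    (hVk : Vkᵀ * Vk = 1) (hVc : Vcᵀ * Vc = 1) (hVkc : Vkᵀ * Vc = 0)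
    (hVfull : Vk * Vkᵀ + Vc * Vcᵀ = 1)
    (D : Matrix (Fin k) (Fin k) ℝ)
    (A : Matrix (Fin m) (Fin n) ℝ) (hA : A = Uk * D * Vkᵀ)
    (Δ Δ₁ Δ₂ : Matrix (Fin m) (Fin n) ℝ)
    (hΔ₂ : Δ₂ = Uc * Ucᵀ * Δ * Vc * Vcᵀ) (hΔ₁ : Δ₁ = Δ - Δ₂) :
    nuclearNorm Δ + 2 * nuclearNorm A - 2 * nuclearNorm (Δ + A)
      ≤ 3 * nuclearNorm Δ₁ - nuclearNorm Δ₂ := by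
  have hUc' : Ucᵀ * Uk = 0 := by
    have := congrArg Matrix.transpose hUkc
    simpa using this
  have hVc' : Vcᵀ * Vk = 0 := by
    have := congrArg Matrix.transpose hVkc
    simpa using this
  have hXtY : Δ₂ᵀ * A = 0 := by
    rw [hΔ₂, hA]
    simp only [Matrix.transpose_mul, Matrix.transpose_transpose, Matrix.mul_assoc]
    rw [← Matrix.mul_assoc Ucᵀ Uk, hUc', Matrix.zero_mul]
    simp
  have hXYt : Δ₂ * Aᵀ = 0 := by
    rw [hΔ₂, hA]
    simp only [Matrix.transpose_mul, Matrix.transpose_transpose, Matrix.mul_assoc]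
    rw [← Matrix.mul_assoc Vcᵀ Vk, hVc', Matrix.zero_mul]
    simp
  have hadd : nuclearNorm (Δ₂ + A) = nuclearNorm Δ₂ + nuclearNorm A :=
    nn_add_of_orth _ _ hXtY hXYt
  have htriA : nuclearNorm Δ ≤ nuclearNorm Δ₁ + nuclearNorm Δ₂ := by
    have hd : Δ = Δ₁ + Δ₂ := by rw [hΔ₁]; abel
    rw [hd]
    exact nn_triangle _ _
  have hneg : nuclearNorm (-Δ₁) = nuclearNorm Δ₁ := by
    refine nn_congr _ _ ?_
    simp
  have htriB : nuclearNorm (Δ₂ + A) ≤ nuclearNorm (Δ + A) + nuclearNorm Δ₁ := by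
    have he : Δ₂ + A = (Δ + A) + (-Δ₁) := by rw [hΔ₁]; abel
    rw [he]
    calc nuclearNorm ((Δ + A) + (-Δ₁)) ≤ nuclearNorm (Δ + A) + nuclearNorm (-Δ₁) :=
          nn_triangle _ _
      _ = nuclearNorm (Δ + A) + nuclearNorm Δ₁ := by rw [hneg]
  linarith
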